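/- Let d ≥ 1, let C ⊆ ℂ^d be a Borel measurable cone (i.e. r·V ∈ C for every V ∈ C and every real r > 0), let Q be a positive definite real quadratic form on ℂ^d (viewed as a real vector space of dimension 2d), and let A > 0. For ε > 0 define S(ε) = { V = (v₁,…,v_d) ∈ C : |vᵢ|² < ε²·(A − Q(V)) for all 1 ≤ i ≤ d }, and let C₁ = { V ∈ C : |vᵢ| < 1 for all i }. Then there exist constants K > 0 and ε₀ > 0 such that for all 0 < ε < ε₀, | λ(S(ε)) − ε^{2d}·A^d·λ(C₁) | ≤ K·ε^{2d+2}, where λ denotes Lebesgue measure on ℂ^d. -/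

import Mathlib

open MeasureTheory Pointwise

private lemma cone_smul_sep {d : ℕ} (C : Set (Fin d → ℂ))
    (hcone : ∀ V ∈ C, ∀ r : ℝ, 0 < r → r • V ∈ C)
    (P : (Fin d → ℂ) → Prop) {r : ℝ} (hr : 0 < r) :
    r • {V ∈ C | P V} = {V ∈ C | P (r⁻¹ • V)} := by
  ext V
  rw [Set.mem_smul_set_iff_inv_smul_mem₀ hr.ne']
  constructor
  · rintro ⟨h1, h2⟩
    refine ⟨?_, h2⟩
    have := hcone _ h1 r hr
    rwa [smul_inv_smul₀ hr.ne'] at this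
  · rintro ⟨h1, h2⟩
    exact ⟨hcone _ h1 r⁻¹ (by positivity), h2⟩

/-- **Asymptotic volume of truncated cones** (the measure-theoretic core of Lemma 6.13).
Let `C ⊆ ℂ^d` be a measurable cone, `Q` a positive definite real quadratic form on `ℂ^d`,
and `A > 0`. For `S(ε) = {V ∈ C : |vᵢ|² < ε²(A − Q(V)) ∀i}` and
`C₁ = {V ∈ C : |vᵢ| < 1 ∀i}`, there are `K > 0` and `ε₀ > 0` with
`|λ(S(ε)) − ε^{2d}·A^d·λ(C₁)| ≤ K·ε^{2d+2}` for all `0 < ε < ε₀`. -/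
theorem volume_truncated_cone_asymptotics
    (d : ℕ) (hd : 1 ≤ d)
    (C : Set (Fin d → ℂ)) (hC : MeasurableSet C)
    (hcone : ∀ V ∈ C, ∀ r : ℝ, 0 < r → r • V ∈ C)
    (Q : QuadraticForm ℝ (Fin d → ℂ))
    (hQ : ∀ V : Fin d → ℂ, V ≠ 0 → 0 < Q V)
    (A : ℝ) (hA : 0 < A) :
    ∃ K > (0 : ℝ), ∃ ε₀ > (0 : ℝ), ∀ ε : ℝ, 0 < ε → ε < ε₀ →
      |(volume {V ∈ C | ∀ i, ‖V i‖ ^ 2 < ε ^ 2 * (A - Q V)}).toReal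
        - ε ^ (2 * d) * A ^ d * (volume {V ∈ C | ∀ i, ‖V i‖ < 1}).toReal|
        ≤ K * ε ^ (2 * d + 2) := by
  classical
  have hfr : Module.finrank ℝ (Fin d → ℂ) = 2 * d := by
    simp [Module.finrank_pi_fintype, Complex.finrank_real_complex, mul_comm]
  -- continuity of Q
  have hQc : Continuous fun V : Fin d → ℂ => Q V := by
    let B := (LinearMap.toContinuousLinearMap).toLinearMap ∘ₗ Q.polarBilin
    have hB : Continuous B := B.continuous_of_finiteDimensional
    have h2 : Continuous fun V => B V V := hB.clm_apply continuous_id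
    have hQ' : ∀ V, Q V = (B V V) / 2 := by
      intro V
      have h := QuadraticMap.polar_self Q V
      simp only [B, LinearMap.comp_apply, LinearEquiv.coe_coe,
        LinearMap.coe_toContinuousLinearMap', QuadraticMap.polarBilin_apply_apply, h]
      ring
    simp only [hQ']
    exact h2.div_const 2
  have hQnn : ∀ V : Fin d → ℂ, 0 ≤ Q V := by
    intro V
    by_cases h : V = 0
    · simp [h]
    · exact (hQ V h).le
  -- bound of Q on the closed unit polydisc
  obtain ⟨W₀, -, hW₀⟩ := (isCompact_closedBall (0 : Fin d → ℂ) 1).exists_isMaxOn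
      ⟨0, Metric.mem_closedBall_self zero_le_one⟩ hQc.continuousOn
  set M : ℝ := Q W₀ + 1 with hMdef
  have hM0 : 0 < M := by have := hQnn W₀; rw [hMdef]; linarith
  have hMb : ∀ V : Fin d → ℂ, (∀ i, ‖V i‖ ≤ 1) → Q V ≤ M := by
    intro V hV
    have hVb : V ∈ Metric.closedBall (0 : Fin d → ℂ) 1 := by
      rw [Metric.mem_closedBall, dist_zero_right, pi_norm_le_iff_of_nonneg zero_le_one]
      exact fun i => hV i
    have h : Q V ≤ Q W₀ := hW₀ hVb
    rw [hMdef]; linarith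
  set C₁ := {V ∈ C | ∀ i, ‖V i‖ < 1} with hC₁
  have hC₁fin : volume C₁ ≠ ⊤ := by
    refine (lt_of_le_of_lt (measure_mono (fun V hV => ?_))
      (measure_closedBall_lt_top (x := (0 : Fin d → ℂ)) (r := 1))).ne
    obtain ⟨-, hV2⟩ := hV
    rw [Metric.mem_closedBall, dist_zero_right, pi_norm_le_iff_of_nonneg zero_le_one]
    exact fun i => (hV2 i).le
  set L := (volume C₁).toReal with hLdef
  have hL0 : 0 ≤ L := ENNReal.toReal_nonneg
  have hKnn : 0 ≤ A ^ d * ((d : ℝ) * M * L) :=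
    mul_nonneg (pow_nonneg hA.le d)
      (mul_nonneg (mul_nonneg (Nat.cast_nonneg d) hM0.le) hL0)
  refine ⟨A ^ d * ((d : ℝ) * M * L) + 1, by linarith, min (Real.sqrt M⁻¹) 1,
    lt_min (Real.sqrt_pos.mpr (inv_pos.mpr hM0)) one_pos, ?_⟩
  intro ε hε hεlt
  have hεM : ε ^ 2 * M < 1 := by
    have h1 : ε < Real.sqrt M⁻¹ := lt_of_lt_of_le hεlt (min_le_left _ _)
    have hsq : Real.sqrt M⁻¹ ^ 2 = M⁻¹ := Real.sq_sqrt (inv_pos.mpr hM0).le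
    have h2 : ε ^ 2 < M⁻¹ := by nlinarith [Real.sqrt_nonneg M⁻¹]
    calc ε ^ 2 * M < M⁻¹ * M := by nlinarith
    _ = 1 := inv_mul_cancel₀ hM0.ne'
  -- the rescaled set T
  set c : ℝ := ε * Real.sqrt A with hcdef
  have hc : 0 < c := by
    rw [hcdef]; exact mul_pos hε (Real.sqrt_pos.mpr hA)
  have hc2 : c ^ 2 = ε ^ 2 * A := by
    rw [hcdef, mul_pow, Real.sq_sqrt hA.le]
  set T := {V ∈ C | ∀ i, ‖V i‖ ^ 2 < 1 - ε ^ 2 * Q V} with hTdef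
  have e1 : ∀ x q : ℝ, (c⁻¹ * x) ^ 2 < 1 - ε ^ 2 * (c⁻¹ * c⁻¹ * q) ↔
      x ^ 2 < ε ^ 2 * (A - q) := by
    intro x q
    have hc2pos : (0 : ℝ) < c ^ 2 := pow_pos hc 2
    have h1 : (c⁻¹ * x) ^ 2 = x ^ 2 / c ^ 2 := by
      field_simp
    have h2 : 1 - ε ^ 2 * (c⁻¹ * c⁻¹ * q) = (c ^ 2 - ε ^ 2 * q) / c ^ 2 := by
      field_simp
    have h3 : c ^ 2 - ε ^ 2 * q = ε ^ 2 * (A - q) := by rw [hc2]; ring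
    rw [h1, h2, div_lt_div_iff_of_pos_right hc2pos, h3]
  have habs : ∀ (r : ℝ), 0 < r → ∀ (V : Fin d → ℂ) (i : Fin d),
      ‖(r⁻¹ • V) i‖ = r⁻¹ * ‖V i‖ := by
    intro r hr V i
    show ‖r⁻¹ • V i‖ = _
    rw [norm_smul, Real.norm_eq_abs,
      abs_of_pos (by positivity)]
  have hQs : ∀ V : Fin d → ℂ, Q (c⁻¹ • V) = c⁻¹ * c⁻¹ * Q V := by
    intro V
    simpa [smul_eq_mul, mul_assoc] using QuadraticMap.map_smul Q c⁻¹ V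
  have hS : {V ∈ C | ∀ i, ‖V i‖ ^ 2 < ε ^ 2 * (A - Q V)} = c • T := by
    rw [hTdef, cone_smul_sep C hcone _ hc]
    ext V
    simp only [Set.mem_setOf_eq]
    refine and_congr_right fun _ => forall_congr' fun i => ?_
    rw [habs c hc V i, hQs V]
    exact (e1 (‖V i‖) (Q V)).symm
  have hvolS : (volume {V ∈ C | ∀ i, ‖V i‖ ^ 2 < ε ^ 2 * (A - Q V)}).toReal
      = ε ^ (2 * d) * A ^ d * (volume T).toReal := by
    rw [hS, Measure.addHaar_smul, hfr, ENNReal.toReal_mul, ENNReal.toReal_ofReal (abs_nonneg _),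
      abs_of_pos (pow_pos hc _)]
    congr 1
    rw [pow_mul, hc2, mul_pow, ← pow_mul]
  -- the inner set Cs
  set s : ℝ := Real.sqrt (1 - ε ^ 2 * M) with hsdef
  have hs2 : s ^ 2 = 1 - ε ^ 2 * M := Real.sq_sqrt (by linarith)
  have hs : 0 < s := Real.sqrt_pos.mpr (by linarith)
  have hs1 : s ≤ 1 := by
    nlinarith [sq_nonneg (s - 1), mul_pos (pow_pos hε 2) hM0]
  have hCs : s • C₁ = {V ∈ C | ∀ i, ‖V i‖ < s} := by
    rw [hC₁, cone_smul_sep C hcone _ hs]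
    ext V
    simp only [Set.mem_setOf_eq]
    refine and_congr_right fun _ => forall_congr' fun i => ?_
    rw [habs s hs V i]
    constructor
    · intro h
      have h2 : s * (s⁻¹ * ‖V i‖) < s * 1 := mul_lt_mul_of_pos_left h hs
      rwa [mul_one, ← mul_assoc, mul_inv_cancel₀ hs.ne', one_mul] at h2
    · intro h
      have : s⁻¹ * ‖V i‖ < s⁻¹ * s :=
        mul_lt_mul_of_pos_left h (inv_pos.mpr hs)
      rwa [inv_mul_cancel₀ hs.ne'] at this
  have hTsub : T ⊆ C₁ := by
    rintro V ⟨hVC, hVi⟩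
    refine ⟨hVC, fun i => ?_⟩
    have h1 := hVi i
    nlinarith [norm_nonneg (V i), mul_nonneg (sq_nonneg ε) (hQnn V)]
  have hCsub : s • C₁ ⊆ T := by
    rw [hCs]
    rintro V ⟨hVC, hVi⟩
    refine ⟨hVC, fun i => ?_⟩
    have hQV : Q V ≤ M := hMb V fun j => le_trans (hVi j).le hs1
    have h1 : ‖V i‖ ^ 2 < s ^ 2 :=
      pow_lt_pow_left₀ (hVi i) (norm_nonneg (V i)) two_ne_zero
    rw [hs2] at h1
    have h2 : ε ^ 2 * Q V ≤ ε ^ 2 * M := mul_le_mul_of_nonneg_left hQV (sq_nonneg ε)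
    linarith
  have hvolCs : (volume (s • C₁)).toReal = s ^ (2 * d) * L := by
    rw [Measure.addHaar_smul, hfr, ENNReal.toReal_mul, ENNReal.toReal_ofReal (abs_nonneg _),
      abs_of_pos (pow_pos hs _), hLdef]
  have hTfin : volume T ≠ ⊤ := ne_top_of_le_ne_top hC₁fin (measure_mono hTsub)
  set t := (volume T).toReal with htdef
  have ht_le : t ≤ L := ENNReal.toReal_mono hC₁fin (measure_mono hTsub)
  have ht_ge : s ^ (2 * d) * L ≤ t := by
    rw [← hvolCs]
    exact ENNReal.toReal_mono hTfin (measure_mono hCsub)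
  -- Bernoulli's inequality
  have hbern : 1 - (d : ℝ) * (ε ^ 2 * M) ≤ s ^ (2 * d) := by
    have h := one_add_mul_le_pow (a := -(ε ^ 2 * M)) (by linarith) d
    have h2 : s ^ (2 * d) = (1 - ε ^ 2 * M) ^ d := by rw [pow_mul, hs2]
    have h3 : (1 : ℝ) + -(ε ^ 2 * M) = 1 - ε ^ 2 * M := by ring
    have h4 : (1 : ℝ) + (d : ℝ) * -(ε ^ 2 * M) = 1 - (d : ℝ) * (ε ^ 2 * M) := by ring
    rw [h3, h4] at h
    rw [h2]
    exact h
  have hLmt : L - t ≤ (d : ℝ) * (ε ^ 2 * M) * L := by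
    have h1 : (1 - (d : ℝ) * (ε ^ 2 * M)) * L ≤ s ^ (2 * d) * L :=
      mul_le_mul_of_nonneg_right hbern hL0
    have h2 : (1 - (d : ℝ) * (ε ^ 2 * M)) * L = L - (d : ℝ) * (ε ^ 2 * M) * L := by ring
    linarith
  have ha0 : 0 ≤ ε ^ (2 * d) * A ^ d :=
    mul_nonneg (pow_nonneg hε.le _) (pow_nonneg hA.le _)
  rw [hvolS]
  have habseq : |ε ^ (2 * d) * A ^ d * t - ε ^ (2 * d) * A ^ d * L|
      = ε ^ (2 * d) * A ^ d * (L - t) := by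
    rw [show ε ^ (2 * d) * A ^ d * t - ε ^ (2 * d) * A ^ d * L
        = -(ε ^ (2 * d) * A ^ d * (L - t)) by ring, abs_neg,
      abs_of_nonneg (mul_nonneg ha0 (by linarith))]
  rw [habseq]
  calc ε ^ (2 * d) * A ^ d * (L - t)
      ≤ ε ^ (2 * d) * A ^ d * ((d : ℝ) * (ε ^ 2 * M) * L) :=
        mul_le_mul_of_nonneg_left hLmt ha0
    _ = A ^ d * ((d : ℝ) * M * L) * ε ^ (2 * d + 2) := by
        rw [pow_add]; ring
    _ ≤ (A ^ d * ((d : ℝ) * M * L) + 1) * ε ^ (2 * d + 2) := by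
        have h5 : (0:ℝ) ≤ ε ^ (2 * d + 2) := pow_nonneg hε.le _
        have h6 := mul_le_mul_of_nonneg_right
          (le_add_of_nonneg_right (zero_le_one' ℝ) :
            A ^ d * ((d : ℝ) * M * L) ≤ A ^ d * ((d : ℝ) * M * L) + 1) h5
        exact h6
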